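/- arXiv:2507.04445 — 2 statements merged into one kernel-verified Lean document; each statement's English description precedes it below -/
import Mathlib

section
/- There exist a one-sorted first-order language L (necessarily uncountable) and an L-theory T such that T is stably finite and finitely smooth, but not smooth. (In particular, the assumption of a countable signature is necessary in the theorem stating that stably finite and finitely smooth theories are smooth.) -/
open FirstOrder FirstOrder.Language

universe u v

/-- `M` (with structure `inst`) is a model of the theory `T`. -/
def ModelsT (L : FirstOrder.Language.{u, v}) (T : L.Theory) (M : Type) (inst : L.Structure M) : Prop :=
  letI := inst
  T.Model M

/-- Realization of a formula, with the structure instance given explicitly. -/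
def RealizeIn (L : FirstOrder.Language.{u, v}) (M : Type) (inst : L.Structure M) {α : Type}
    (φ : L.Formula α) (v : α → M) : Prop :=
  letI := inst
  φ.Realize v

/-- A valuation `v` satisfies the arrangement `δ_V^E` determined on the finite variable
set `V` by the equivalence relation `E`. -/
def RealizesArr {M : Type} (E : Setoid ℕ) (V : Finset ℕ) (v : ℕ → M) : Prop :=
  ∀ x ∈ V, ∀ y ∈ V, (E.r x y ↔ v x = v y)

/-- `T` is stably finite: every quantifier-free formula satisfied in a model of `T` is
satisfied in a finite model of `T` of no greater cardinality. -/
def StablyFiniteT (L : FirstOrder.Language.{u, v}) (T : L.Theory) : Prop :=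
  ∀ φ : L.Formula ℕ, φ.IsQF →
    ∀ (M : Type) (inst : L.Structure M), ModelsT L T M inst →
      ∀ v : ℕ → M, RealizeIn L M inst φ v →
        ∃ (N : Type) (instN : L.Structure N), ModelsT L T N instN ∧ Finite N ∧
          Cardinal.mk N ≤ Cardinal.mk M ∧ ∃ w : ℕ → N, RealizeIn L N instN φ w

/-- `T` is finitely smooth: for every quantifier-free formula `φ`, model of `T` with a
valuation satisfying `φ`, and finite cardinal `κ` at least the size of the model, there
is a model of `T` of size exactly `κ` with a valuation satisfying `φ`. -/
def FinitelySmoothT (L : FirstOrder.Language.{u, v}) (T : L.Theory) : Prop :=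
  ∀ φ : L.Formula ℕ, φ.IsQF →
    ∀ (M : Type) (inst : L.Structure M), ModelsT L T M inst →
      ∀ v : ℕ → M, RealizeIn L M inst φ v →
        ∀ κ : ℕ, Cardinal.mk M ≤ (κ : Cardinal) →
          ∃ (N : Type) (instN : L.Structure N), ModelsT L T N instN ∧
            Cardinal.mk N = (κ : Cardinal) ∧ ∃ w : ℕ → N, RealizeIn L N instN φ w

/-- `T` is smooth: for every quantifier-free formula `φ`, model of `T` with a valuation
satisfying `φ`, and cardinal `κ` at least the size of the model, there is a model of `T`
of size exactly `κ` with a valuation satisfying `φ`. -/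
def SmoothT (L : FirstOrder.Language.{u, v}) (T : L.Theory) : Prop :=
  ∀ φ : L.Formula ℕ, φ.IsQF →
    ∀ (M : Type) (inst : L.Structure M), ModelsT L T M inst →
      ∀ v : ℕ → M, RealizeIn L M inst φ v →
        ∀ κ : Cardinal, Cardinal.mk M ≤ κ →
          ∃ (N : Type) (instN : L.Structure N), ModelsT L T N instN ∧
            Cardinal.mk N = κ ∧ ∃ w : ℕ → N, RealizeIn L N instN φ w

/-- `T` is stably infinite: every quantifier-free formula satisfiable in some model of `T`
is satisfiable in some model of `T` with infinite domain. -/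
def StablyInfiniteT (L : FirstOrder.Language.{u, v}) (T : L.Theory) : Prop :=
  ∀ φ : L.Formula ℕ, φ.IsQF →
    (∃ (M : Type) (inst : L.Structure M), ModelsT L T M inst ∧
      ∃ v : ℕ → M, RealizeIn L M inst φ v) →
    ∃ (M : Type) (inst : L.Structure M), ModelsT L T M inst ∧ Infinite M ∧
      ∃ v : ℕ → M, RealizeIn L M inst φ v

/-- `wit` is a pre-witness for `T`: it maps quantifier-free formulas to quantifier-free
formulas; `φ` and `∃x⃗. wit(φ)` (where `x⃗ = vars(wit(φ)) \ vars(φ)`) hold in exactly the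
same models-with-valuations of `T`; and if `wit(φ)` is satisfiable in a model of `T`,
then `φ` is satisfied in some model of `T` under a valuation in which every element of
the domain is the value of some variable of `wit(φ)`. -/
def IsPreWitness (L : FirstOrder.Language.{u, v}) (T : L.Theory) (wit : L.Formula ℕ → L.Formula ℕ) :
    Prop :=
  (∀ φ : L.Formula ℕ, φ.IsQF → (wit φ).IsQF) ∧
  (∀ φ : L.Formula ℕ, φ.IsQF →
    ∀ (M : Type) (inst : L.Structure M), ModelsT L T M inst → ∀ v : ℕ → M,
      (RealizeIn L M inst φ v ↔
        ∃ w : ℕ → M, (∀ x : ℕ, x ∉ (wit φ).freeVarFinset \ φ.freeVarFinset → w x = v x) ∧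
          RealizeIn L M inst (wit φ) w)) ∧
  (∀ φ : L.Formula ℕ, φ.IsQF →
    (∃ (M : Type) (inst : L.Structure M), ModelsT L T M inst ∧
      ∃ v : ℕ → M, RealizeIn L M inst (wit φ) v) →
    ∃ (M : Type) (inst : L.Structure M), ModelsT L T M inst ∧
      ∃ v : ℕ → M, RealizeIn L M inst φ v ∧
        ∀ a : M, ∃ x ∈ (wit φ).freeVarFinset, v x = a)

/-- `wit` is a strong pre-witness for `T`: a pre-witness such that in addition, for every
quantifier-free `φ`, finite variable set `V`, and arrangement `δ_V` of `V`, if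
`wit(φ) ∧ δ_V` is satisfiable in a model of `T`, then it is satisfied in some model of `T`
under a valuation in which every element of the domain is the value of some variable of
`wit(φ) ∧ δ_V`. -/
def IsStrongPreWitness (L : FirstOrder.Language.{u, v}) (T : L.Theory)
    (wit : L.Formula ℕ → L.Formula ℕ) : Prop :=
  IsPreWitness L T wit ∧
  ∀ φ : L.Formula ℕ, φ.IsQF → ∀ (V : Finset ℕ) (E : Setoid ℕ),
    (∃ (M : Type) (inst : L.Structure M), ModelsT L T M inst ∧
      ∃ v : ℕ → M, RealizeIn L M inst (wit φ) v ∧ RealizesArr E V v) →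
    ∃ (M : Type) (inst : L.Structure M), ModelsT L T M inst ∧
      ∃ v : ℕ → M, RealizeIn L M inst (wit φ) v ∧ RealizesArr E V v ∧
        ∀ a : M, ∃ x ∈ (wit φ).freeVarFinset ∪ V, v x = a

noncomputable section

namespace SFX

/-- The relations: arity 1 indexed by ℝ, arity 2 the order. -/
def Rels : ℕ → Type := fun n =>
  match n with
  | 1 => ℝ
  | 2 => Unit
  | _ => Empty

def L0 : FirstOrder.Language.{0,0} := ⟨fun _ => Empty, Rels⟩

def ltR : L0.Relations 2 := Unit.unit
def PR (r : ℝ) : L0.Relations 1 := r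

/-- A structure built from an order relation and cut membership. -/
def str (X : Type) (lt : X → X → Prop) (mem : ℝ → X → Prop) : L0.Structure X where
  funMap := fun {n} f _ => Empty.elim f
  RelMap := fun {n} R x =>
    match n, R, x with
    | 1, r, x => mem r (x 0)
    | 2, _, x => lt (x 0) (x 1)
    | 0, e, _ => Empty.elim e
    | (_+3), e, _ => Empty.elim e

section Abstract
variable {M : Type} (inst : L0.Structure M)

/-- the order of a structure -/
def ltM (a b : M) : Prop := inst.RelMap ltR ![a, b]
/-- cut membership in a structure -/
def PM (r : ℝ) (a : M) : Prop := inst.RelMap (PR r) ![a]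

end Abstract

lemma str_lt {X : Type} {lt : X → X → Prop} {mem : ℝ → X → Prop} (a b : X) :
    ltM (str X lt mem) a b ↔ lt a b := Iff.rfl

lemma str_mem {X : Type} {lt : X → X → Prop} {mem : ℝ → X → Prop} (r : ℝ) (a : X) :
    PM (str X lt mem) r a ↔ mem r a := Iff.rfl

end SFX

namespace SFX

/-- enumeration of the rationals -/
def qq (n : ℕ) : ℚ := (Denumerable.eqv ℚ).symm n

lemma qq_inj : Function.Injective qq := (Denumerable.eqv ℚ).symm.injective

/-- the rationals as reals -/
def qr (n : ℕ) : ℝ := (qq n : ℝ)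

lemma qr_inj : Function.Injective qr := fun a b h => qq_inj (Rat.cast_injective h)

lemma exists_qr_mem_Ioc {r s : ℝ} (h : r < s) : ∃ j, qr j ∈ Set.Ioc r s := by
  obtain ⟨p, hp1, hp2⟩ := exists_rat_btwn h
  refine ⟨Denumerable.eqv ℚ p, ?_⟩
  simp only [qr, qq, Equiv.symm_apply_apply, Set.mem_Ioc]
  exact ⟨hp1, le_of_lt hp2⟩

open Classical in
/-- index of the first rational in `(r, s]`. -/
def kk (r s : ℝ) : ℕ :=
  if h : ∃ j, qr j ∈ Set.Ioc r s then Nat.find h else 0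

lemma kk_spec {r s : ℝ} (h : r < s) :
    qr (kk r s) ∈ Set.Ioc r s ∧ ∀ j < kk r s, qr j ∉ Set.Ioc r s := by
  have h' := exists_qr_mem_Ioc h
  classical
  rw [kk]
  rw [dif_pos h']
  exact ⟨Nat.find_spec h', fun j hj => Nat.find_min h' hj⟩

lemma kk_eq {r s : ℝ} (h : r < s) {k : ℕ} (h1 : qr k ∈ Set.Ioc r s)
    (h2 : ∀ j < k, qr j ∉ Set.Ioc r s) : kk r s = k := by
  have h' := exists_qr_mem_Ioc h
  classical
  rw [kk]
  rw [dif_pos h']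
  exact le_antisymm (Nat.find_le h1) (le_of_not_gt fun hc => h2 _ hc (Nat.find_spec h'))

end SFX

namespace SFX

def axTrans : L0.Sentence :=
  ∀' ∀' ∀' (ltR.boundedFormula₂ &0 &1 ⊓ ltR.boundedFormula₂ &1 &2 ⟹ ltR.boundedFormula₂ &0 &2)

def axIrrefl : L0.Sentence := ∀' ∼(ltR.boundedFormula₂ &0 &0)

def axTotal : L0.Sentence :=
  ∀' ∀' (ltR.boundedFormula₂ &0 &1 ⊔ Term.bdEqual &0 &1 ⊔ ltR.boundedFormula₂ &1 &0)

def axMono (r s : ℝ) : L0.Sentence :=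
  ∀' ((PR r).boundedFormula₁ &0 ⟹ (PR s).boundedFormula₁ &0)

def axDown (r : ℝ) : L0.Sentence :=
  ∀' ∀' (ltR.boundedFormula₂ &0 &1 ⊓ (PR r).boundedFormula₁ &1 ⟹ (PR r).boundedFormula₁ &0)

def axMax (r s : ℝ) : L0.Sentence :=
  Sentence.cardGe L0 (2 * kk r s + 2) ⟹
    ∃' ((PR s).boundedFormula₁ &0 ⊓ ∼((PR r).boundedFormula₁ &0) ⊓
        ∀' ((PR s).boundedFormula₁ &1 ⟹ (ltR.boundedFormula₂ &1 &0 ⊔ Term.bdEqual &1 &0)))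

def T0 : L0.Theory :=
  {axTrans, axIrrefl, axTotal} ∪ {φ | ∃ r s : ℝ, r < s ∧ φ = axMono r s} ∪
    {φ | ∃ r : ℝ, φ = axDown r} ∪ {φ | ∃ r s : ℝ, r < s ∧ φ = axMax r s}

section RealizeLemmas

variable {M : Type} (inst : L0.Structure M)

lemma vec1 (x : Fin 1 → M) : ![x 0] = x := by
  funext i; fin_cases i <;> rfl

lemma vec2 (x : Fin 2 → M) : ![x 0, x 1] = x := by
  funext i; fin_cases i <;> rfl

lemma realize_axTrans :
    (letI := inst; M ⊨ axTrans) ↔ ∀ a b c : M, ltM inst a b → ltM inst b c → ltM inst a c := by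
  letI := inst
  simp [axTrans, Sentence.Realize, Formula.Realize, ltM, Fin.snoc]

lemma realize_axIrrefl :
    (letI := inst; M ⊨ axIrrefl) ↔ ∀ a : M, ¬ ltM inst a a := by
  letI := inst
  simp [axIrrefl, Sentence.Realize, Formula.Realize, ltM, Fin.snoc]

lemma realize_axTotal :
    (letI := inst; M ⊨ axTotal) ↔ ∀ a b : M, ltM inst a b ∨ a = b ∨ ltM inst b a := by
  letI := inst
  simp [axTotal, Sentence.Realize, Formula.Realize, ltM, Fin.snoc, or_assoc]

lemma realize_axMono (r s : ℝ) :
    (letI := inst; M ⊨ axMono r s) ↔ ∀ a : M, PM inst r a → PM inst s a := by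
  letI := inst
  simp [axMono, Sentence.Realize, Formula.Realize, PM, Fin.snoc]

lemma realize_axDown (r : ℝ) :
    (letI := inst; M ⊨ axDown r) ↔ ∀ a b : M, ltM inst a b → PM inst r b → PM inst r a := by
  letI := inst
  simp [axDown, Sentence.Realize, Formula.Realize, ltM, PM, Fin.snoc]

lemma realize_axMax (r s : ℝ) :
    (letI := inst; M ⊨ axMax r s) ↔
      ((2 * kk r s + 2 : Cardinal) ≤ Cardinal.mk M →
        ∃ x : M, PM inst s x ∧ ¬ PM inst r x ∧ ∀ y : M, PM inst s y → ltM inst y x ∨ y = x) := by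
  letI := inst
  simp only [axMax, Sentence.Realize, Formula.Realize, BoundedFormula.realize_imp,
    BoundedFormula.realize_ex, BoundedFormula.realize_inf, BoundedFormula.realize_not,
    BoundedFormula.realize_all, BoundedFormula.realize_sup, BoundedFormula.realize_bdEqual,
    BoundedFormula.realize_rel₁, BoundedFormula.realize_rel₂, Term.realize_var]
  have hc0 : BoundedFormula.Realize (Sentence.cardGe L0 (2 * kk r s + 2)) default default ↔
      ((2 * kk r s + 2 : ℕ) : Cardinal) ≤ Cardinal.mk M := Sentence.realize_cardGe L0 _
  rw [hc0]
  constructor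
  · rintro h hc
    obtain ⟨x, ⟨h1, h2⟩, h3⟩ := h (by exact_mod_cast hc)
    exact ⟨x, by simpa [Fin.snoc, ltM, PM, vec1, vec2] using h1,
      by simpa [Fin.snoc, PM] using h2,
      fun y hy => by simpa [Fin.snoc, ltM, PM] using h3 y (by simpa [Fin.snoc, PM] using hy)⟩
  · rintro h hc
    obtain ⟨x, h1, h2, h3⟩ := h (by exact_mod_cast hc)
    refine ⟨x, ⟨by simpa [Fin.snoc, PM], by simpa [Fin.snoc, PM]⟩, fun y hy => ?_⟩
    simpa [Fin.snoc, ltM, PM] using h3 y (by simpa [Fin.snoc, PM] using hy)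

end RealizeLemmas

end SFX

namespace SFX

section ModelFacts

variable {M : Type} (inst : L0.Structure M)

lemma memTrans : axTrans ∈ T0 := by simp [T0]
lemma memIrrefl : axIrrefl ∈ T0 := by simp [T0]
lemma memTotal : axTotal ∈ T0 := by simp [T0]
lemma memMono {r s : ℝ} (h : r < s) : axMono r s ∈ T0 := by
  simp only [T0, Set.mem_union]; exact Or.inl (Or.inl (Or.inr ⟨r, s, h, rfl⟩))
lemma memDown (r : ℝ) : axDown r ∈ T0 := by
  simp only [T0, Set.mem_union]; exact Or.inl (Or.inr ⟨r, rfl⟩)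
lemma memMax {r s : ℝ} (h : r < s) : axMax r s ∈ T0 := by
  simp only [T0, Set.mem_union]; exact Or.inr ⟨r, s, h, rfl⟩

lemma mTrans (hM : letI := inst; M ⊨ T0) : ∀ a b c : M, ltM inst a b → ltM inst b c → ltM inst a c :=
  (realize_axTrans inst).1 ((Theory.model_iff (L := L0) (M := M) T0).1 hM _ memTrans)

lemma mIrrefl (hM : letI := inst; M ⊨ T0) : ∀ a : M, ¬ ltM inst a a :=
  (realize_axIrrefl inst).1 ((Theory.model_iff (L := L0) (M := M) T0).1 hM _ memIrrefl)

lemma mTotal (hM : letI := inst; M ⊨ T0) : ∀ a b : M, ltM inst a b ∨ a = b ∨ ltM inst b a :=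
  (realize_axTotal inst).1 ((Theory.model_iff (L := L0) (M := M) T0).1 hM _ memTotal)

lemma mMono (hM : letI := inst; M ⊨ T0) {r s : ℝ} (h : r < s) : ∀ a : M, PM inst r a → PM inst s a :=
  (realize_axMono inst r s).1 ((Theory.model_iff (L := L0) (M := M) T0).1 hM _ (memMono h))

lemma mMono' (hM : letI := inst; M ⊨ T0) {r s : ℝ} (h : r ≤ s) : ∀ a : M, PM inst r a → PM inst s a := by
  rcases eq_or_lt_of_le h with rfl | h
  · exact fun a ha => ha
  · exact mMono inst hM h

lemma mDown (hM : letI := inst; M ⊨ T0) (r : ℝ) : ∀ a b : M, ltM inst a b → PM inst r b → PM inst r a :=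
  (realize_axDown inst r).1 ((Theory.model_iff (L := L0) (M := M) T0).1 hM _ (memDown r))

lemma mMax (hM : letI := inst; M ⊨ T0) {r s : ℝ} (h : r < s) :
    ((2 * kk r s + 2 : ℕ) : Cardinal) ≤ Cardinal.mk M →
      ∃ x : M, PM inst s x ∧ ¬ PM inst r x ∧ ∀ y : M, PM inst s y → ltM inst y x ∨ y = x := by
  have := (realize_axMax inst r s).1 ((Theory.model_iff (L := L0) (M := M) T0).1 hM _ (memMax h))
  intro hc
  exact this (by exact_mod_cast hc)

/-- maxima are unique -/
lemma maxUnique' (hM : letI := inst; M ⊨ T0) {s : ℝ} {x y : M} (hxP : PM inst s x) (hyP : PM inst s y)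
    (hx : ∀ z : M, PM inst s z → ltM inst z x ∨ z = x)
    (hy : ∀ z : M, PM inst s z → ltM inst z y ∨ z = y) : x = y := by
  rcases hx y hyP with h1 | h1
  · rcases hy x hxP with h2 | h2
    · exact absurd (mTrans inst hM _ _ _ h1 h2) (mIrrefl inst hM y)
    · exact h2
  · exact h1.symm

lemma pin_of_active (hM : letI := inst; M ⊨ T0) {r₀ s : ℝ} (h₀ : r₀ < s)
    (hact : ∀ r, r₀ ≤ r → r < s → ((2 * kk r s + 2 : ℕ) : Cardinal) ≤ Cardinal.mk M) :
    ∃ x : M, (∀ t, s ≤ t → PM inst t x) ∧ (∀ r, r < s → ¬ PM inst r x) := by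
  obtain ⟨x, hxs, hxr, hxmax⟩ := mMax inst hM h₀ (hact r₀ le_rfl h₀)
  refine ⟨x, fun t ht => mMono' inst hM ht x hxs, fun r hr hPr => ?_⟩
  rcases le_or_gt r r₀ with hle | hlt
  · exact hxr (mMono' inst hM hle x hPr)
  · obtain ⟨y, hys, hyr, hymax⟩ := mMax inst hM hr (hact r hlt.le hr)
    exact hyr (maxUnique' inst hM hys hxs hymax hxmax ▸ hPr)

end ModelFacts

end SFX

namespace SFX

section Pins

variable {M : Type} (inst : L0.Structure M)

/-- In a model of cardinality at least `2k+2`, there is an element whose cut-type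
is exactly `[qr k, ∞)`. -/
lemma pin_exists (hM : letI := inst; M ⊨ T0) (k : ℕ)
    (hk : ((2 * k + 2 : ℕ) : Cardinal) ≤ Cardinal.mk M) :
    ∃ x : M, (∀ t, qr k ≤ t → PM inst t x) ∧ (∀ r, r < qr k → ¬ PM inst r x) := by
  classical
  -- a positive distance δ below which no earlier rational approaches qr k
  set D : Finset ℝ := insert 1 ((Finset.range k).image fun j => |qr j - qr k|) with hD
  have hDne : D.Nonempty := ⟨1, Finset.mem_insert_self 1 _⟩
  set δ : ℝ := D.min' hDne with hδ
  have hδpos : 0 < δ := by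
    rw [hδ]
    rw [Finset.lt_min'_iff]
    intro y hy
    rcases Finset.mem_insert.1 hy with h | h
    · rw [h]; norm_num
    · obtain ⟨j, hj, hje⟩ := Finset.mem_image.1 h
      have hne : qr j ≠ qr k := fun hc => absurd (qr_inj hc) (Nat.ne_of_lt (Finset.mem_range.1 hj))
      rw [← hje]
      exact abs_pos.2 (sub_ne_zero.2 hne)
  have hδle : ∀ j < k, δ ≤ |qr j - qr k| := fun j hj =>
    Finset.min'_le _ _ (Finset.mem_insert_of_mem (Finset.mem_image.2 ⟨j, Finset.mem_range.2 hj, rfl⟩))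
  -- every pair (r, qr k) with r ∈ [qr k - δ, qr k) has kk r (qr k) = k
  have hkk : ∀ r, qr k - δ ≤ r → r < qr k → kk r (qr k) = k := by
    intro r h1 h2
    apply kk_eq h2
    · exact ⟨h2, le_rfl⟩
    · intro j hj hmem
      rcases hmem with ⟨hj1, hj2⟩
      have hne : qr j ≠ qr k := fun hc => absurd (qr_inj hc) (Nat.ne_of_lt hj)
      have habs := hδle j hj
      rcases lt_or_gt_of_ne hne with hlt | hgt
      · have : qr j ≤ qr k - δ := by
          rw [abs_of_neg (by linarith : qr j - qr k < 0)] at habs; linarith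
        linarith
      · linarith [hj2, hgt]
  exact pin_of_active inst hM (by linarith : qr k - δ < qr k)
    (fun r h1 h2 => by rw [hkk r h1 h2]; exact hk)

/-- In an infinite model, pins exist at every real. -/
lemma pin_infinite (hM : letI := inst; M ⊨ T0) (hI : Infinite M) (s : ℝ) :
    ∃ x : M, (∀ t, s ≤ t → PM inst t x) ∧ (∀ r, r < s → ¬ PM inst r x) := by
  refine pin_of_active inst hM (by linarith : s - 1 < s) (fun r h1 h2 => ?_)
  exact le_trans (le_of_lt (Cardinal.nat_lt_aleph0 _)) (Cardinal.aleph0_le_mk M)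

/-- Infinite models of T0 have at least continuum many elements. -/
lemma continuum_le (hM : letI := inst; M ⊨ T0) (hI : Infinite M) :
    Cardinal.continuum ≤ Cardinal.mk M := by
  classical
  have h := fun s : ℝ => pin_infinite inst hM hI s
  choose f hf1 hf2 using h
  have hinj : Function.Injective f := by
    intro s s' hss
    by_contra hne
    rcases lt_or_gt_of_ne hne with h | h
    · exact hf2 s' s h (hss ▸ hf1 s s le_rfl)
    · exact hf2 s s' h (hss ▸ hf1 s' s' le_rfl)
  calc Cardinal.continuum = Cardinal.mk ℝ := Cardinal.mk_real.symm
    _ ≤ Cardinal.mk M := Cardinal.mk_le_of_injective hinj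

end Pins

end SFX

namespace SFX

section Constr

lemma upper_chain {u v : Set ℝ} (hu : IsUpperSet u) (hv : IsUpperSet v) : u ⊆ v ∨ v ⊆ u := by
  by_contra hc
  push_neg at hc
  rw [Set.not_subset, Set.not_subset] at hc
  obtain ⟨⟨a, ha, hav⟩, ⟨b, hb, hbu⟩⟩ := hc
  rcases le_total a b with h | h
  · exact hbu (hu h ha)
  · exact hav (hv h hb)

lemma exists_greatest {α : Type} {R : α → α → Prop} (htr : Transitive R)
    (hto : ∀ x y : α, R x y ∨ x = y ∨ R y x) (s : Finset α) (hs : s.Nonempty) :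
    ∃ m ∈ s, ∀ y ∈ s, R y m ∨ y = m := by
  revert hs
  classical
  induction s using Finset.induction with
  | empty => exact fun hs => absurd hs (by simp)
  | @insert a s ha ih =>
    intro _
    rcases Finset.eq_empty_or_nonempty s with rfl | hs'
    · exact ⟨a, Finset.mem_insert_self _ _, fun y hy => Or.inr (Finset.mem_singleton.1 (by simpa using hy))⟩
    · obtain ⟨m, hm, hmax⟩ := ih hs'
      rcases hto a m with h | h | h
      · exact ⟨m, Finset.mem_insert_of_mem hm, fun y hy => by
          rcases Finset.mem_insert.1 hy with rfl | hy
          · exact Or.inl h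
          · exact hmax y hy⟩
      · exact ⟨m, Finset.mem_insert_of_mem hm, fun y hy => by
          rcases Finset.mem_insert.1 hy with rfl | hy
          · exact Or.inr h
          · exact hmax y hy⟩
      · refine ⟨a, Finset.mem_insert_self _ _, fun y hy => ?_⟩
        rcases Finset.mem_insert.1 hy with rfl | hy
        · exact Or.inr rfl
        · rcases hmax y hy with h' | rfl
          · exact Or.inl (htr h' h)
          · exact Or.inl h

variable {X : Type} (d : X → Set ℝ) (tb : X → X → Prop)

/-- order induced by cut data with a tiebreak -/
def cLT (x y : X) : Prop := d y ⊂ d x ∨ (d x = d y ∧ tb x y)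

variable (hup : ∀ x, IsUpperSet (d x))
  (htb_tr : Transitive tb) (htb_ir : Irreflexive tb)
  (htb_to : ∀ x y : X, x ≠ y → tb x y ∨ tb y x)

lemma cLT_trans (htb_tr : Transitive tb) :
    ∀ x y z : X, cLT d tb x y → cLT d tb y z → cLT d tb x z := by
  rintro x y z (h1 | ⟨h1, h1'⟩) (h2 | ⟨h2, h2'⟩)
  · exact Or.inl (h2.trans h1)
  · exact Or.inl (h2 ▸ h1)
  · exact Or.inl (h1 ▸ h2)
  · exact Or.inr ⟨h1.trans h2, htb_tr h1' h2'⟩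

lemma cLT_irrefl (htb_ir : Irreflexive tb) : ∀ x : X, ¬ cLT d tb x x := by
  rintro x (h | ⟨h, h'⟩)
  · exact ssubset_irrefl _ h
  · exact htb_ir x h'

lemma cLT_total (hup : ∀ x, IsUpperSet (d x))
    (htb_to : ∀ x y : X, x ≠ y → tb x y ∨ tb y x) :
    ∀ x y : X, cLT d tb x y ∨ x = y ∨ cLT d tb y x := by
  intro x y
  by_cases hxy : x = y
  · exact Or.inr (Or.inl hxy)
  by_cases hd : d x = d y
  · rcases htb_to x y hxy with h | h
    · exact Or.inl (Or.inr ⟨hd, h⟩)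
    · exact Or.inr (Or.inr (Or.inr ⟨hd.symm, h⟩))
  · rcases upper_chain (hup x) (hup y) with h | h
    · exact Or.inr (Or.inr (Or.inl ⟨h, fun hc => hd (le_antisymm h hc)⟩))
    · exact Or.inl (Or.inl ⟨h, fun hc => hd (le_antisymm hc h)⟩)

lemma cLT_anti {x y : X} (h : cLT d tb x y) : d y ⊆ d x := by
  rcases h with h | ⟨h, _⟩
  · exact h.1
  · exact h ▸ le_rfl

/-- The structure induced by cut data on a finite type. -/
def cStr : L0.Structure X := str X (cLT d tb) (fun r x => r ∈ d x)

lemma gen_models [Fintype X]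
    (hup : ∀ x, IsUpperSet (d x))
    (htb_tr : Transitive tb) (htb_ir : Irreflexive tb)
    (htb_to : ∀ x y : X, x ≠ y → tb x y ∨ tb y x)
    (hpin : ∀ k : ℕ, 2 * k + 2 ≤ Fintype.card X → ∃ x : X, d x = Set.Ici (qr k)) :
    (letI := cStr d tb; (T0.Model X : Prop)) := by
  classical
  letI inst := cStr d tb
  refine (Theory.model_iff (L := L0) (M := X) T0).2 ?_
  intro φ hφ
  rcases hφ with ((h3 | ⟨r, s, hrs, rfl⟩) | ⟨r, rfl⟩) | ⟨r, s, hrs, rfl⟩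
  · rcases h3 with rfl | rfl | rfl
    · exact (realize_axTrans inst).2 (cLT_trans d tb htb_tr)
    · exact (realize_axIrrefl inst).2 (cLT_irrefl d tb htb_ir)
    · exact (realize_axTotal inst).2 (cLT_total d tb hup htb_to)
  · exact (realize_axMono inst r s).2 (fun a ha => hup a (le_of_lt hrs) ha)
  · exact (realize_axDown inst r).2 (fun a b hab hb => cLT_anti d tb hab hb)
  · refine (realize_axMax inst r s).2 ?_
    intro hc
    have hcard : 2 * kk r s + 2 ≤ Fintype.card X := by
      have := hc.trans_eq (Cardinal.mk_fintype X)
      exact_mod_cast this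
    obtain ⟨p, hp⟩ := hpin (kk r s) hcard
    have hspec := kk_spec hrs
    set P : Finset X := Finset.univ.filter (fun y => s ∈ d y) with hP
    have hpP : p ∈ P := by
      rw [hP, Finset.mem_filter]
      exact ⟨Finset.mem_univ _, by rw [hp]; exact hspec.1.2⟩
    obtain ⟨m, hm, hmax⟩ := exists_greatest (cLT_trans d tb htb_tr)
      (cLT_total d tb hup htb_to) P ⟨p, hpP⟩
    have hmP : s ∈ d m := (Finset.mem_filter.1 hm).2
    refine ⟨m, hmP, ?_, ?_⟩
    · intro hrm
      have hsub : d m ⊆ d p := by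
        rcases hmax p hpP with h | rfl
        · exact cLT_anti d tb h
        · exact le_rfl
      have : r ∈ Set.Ici (qr (kk r s)) := hp ▸ hsub hrm
      exact absurd hspec.1.1 (not_lt.2 this)
    · intro y hy
      exact hmax y (Finset.mem_filter.2 ⟨Finset.mem_univ _, hy⟩)

end Constr

end SFX

namespace SFX

section Transfer

variable {A B : Type} (instA : L0.Structure A) (instB : L0.Structure B)

/-- Build an embedding from compatibility on the two relation families. -/
def mkEmb (g : A → B) (hg : Function.Injective g)
    (hlt : ∀ x y : A, ltM instA x y ↔ ltM instB (g x) (g y))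
    (hmem : ∀ (r : ℝ) (x : A), PM instA r x ↔ PM instB r (g x)) :
    @Embedding L0 A B instA instB :=
  letI := instA
  letI := instB
  { toFun := g
    inj' := hg
    map_fun' := fun {n} f _ => Empty.elim f
    map_rel' := by
      intro n R x
      match n, R with
      | 1, (r : ℝ) =>
        have h1 : x = ![x 0] := (vec1 x).symm
        rw [h1]
        have h2 : (({ toFun := g, inj' := hg } : A ↪ B).toFun ∘ ![x 0]) = ![g (x 0)] := by
          funext i; fin_cases i <;> rfl
        rw [h2]
        exact (hmem r (x 0)).symm
      | 2, R =>
        have h1 : x = ![x 0, x 1] := (vec2 x).symm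
        rw [h1]
        have h2 : (({ toFun := g, inj' := hg } : A ↪ B).toFun ∘ ![x 0, x 1]) = ![g (x 0), g (x 1)] := by
          funext i; fin_cases i <;> rfl
        rw [h2]
        exact (hlt (x 0) (x 1)).symm }

lemma transferQF (g : A → B) (hg : Function.Injective g)
    (hlt : ∀ x y : A, ltM instA x y ↔ ltM instB (g x) (g y))
    (hmem : ∀ (r : ℝ) (x : A), PM instA r x ↔ PM instB r (g x))
    (φ : L0.Formula ℕ) (hφ : φ.IsQF) (v : ℕ → A) :
    (letI := instB; φ.Realize (g ∘ v)) ↔ (letI := instA; φ.Realize v) := by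
  letI := instA
  letI := instB
  have := BoundedFormula.IsQF.realize_embedding hφ (mkEmb instA instB g hg hlt hmem)
    (v := v) (xs := default)
  have hd : ((mkEmb instA instB g hg hlt hmem) ∘ (default : Fin 0 → A)) = default :=
    Subsingleton.elim _ _
  rw [hd] at this
  exact this

lemma realize_congr_freeVar (φ : L0.Formula ℕ) (v v' : ℕ → A)
    (h : ∀ n ∈ φ.freeVarFinset, v n = v' n) :
    (letI := instA; φ.Realize v) ↔ (letI := instA; φ.Realize v') := by
  classical
  letI := instA
  have h1 := BoundedFormula.realize_restrictFreeVar' (L := L0) (M := A)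
    (φ := φ) (s := ↑φ.freeVarFinset) Set.Subset.rfl (v := v) (xs := default)
  have h2 := BoundedFormula.realize_restrictFreeVar' (L := L0) (M := A)
    (φ := φ) (s := ↑φ.freeVarFinset) Set.Subset.rfl (v := v') (xs := default)
  have he : (v ∘ (↑) : ↑(↑φ.freeVarFinset : Set ℕ) → A) = v' ∘ (↑) := by
    funext n
    exact h n.1 (by exact_mod_cast n.2)
  exact Iff.trans h1.symm (by rw [he]; exact h2)

end Transfer

end SFX

namespace SFX

section FS

variable {M : Type} (inst : L0.Structure M)

/-- cut type of an element -/
def bigD (m : M) : Set ℝ := {r | PM inst r m}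

/-- extension tiebreak -/
def extTb {p : ℕ} : M ⊕ Fin p → M ⊕ Fin p → Prop
  | .inl a, .inl b => ltM inst a b
  | .inl _, .inr _ => True
  | .inr _, .inl _ => False
  | .inr i, .inr j => (i : ℕ) < (j : ℕ)

/-- extension cut data -/
def extD {p : ℕ} (base κ : ℕ) : M ⊕ Fin p → Set ℝ
  | .inl a => bigD inst a
  | .inr t => if 2 * (base + (t : ℕ)) + 2 ≤ κ then Set.Ici (qr (base + (t : ℕ))) else ∅

lemma fs_core [Fintype M] (hM : letI := inst; M ⊨ T0) (κ : ℕ)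
    (hκ : Fintype.card M ≤ κ) :
    ∃ (N : Type) (instN : L0.Structure N) (g : M → N),
      (letI := instN; (T0.Model N : Prop)) ∧ Cardinal.mk N = (κ : Cardinal) ∧
      ∀ (φ : L0.Formula ℕ), φ.IsQF → ∀ v : ℕ → M,
        ((letI := instN; φ.Realize (g ∘ v)) ↔ (letI := inst; φ.Realize v)) := by
  classical
  set n := Fintype.card M with hn
  set p := κ - n with hp
  set base := n / 2 with hbase
  set d : (M ⊕ Fin p) → Set ℝ := extD inst base κ with hd
  set tb : (M ⊕ Fin p) → (M ⊕ Fin p) → Prop := extTb inst with htb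
  have hcardX : Fintype.card (M ⊕ Fin p) = κ := by
    simp only [Fintype.card_sum, Fintype.card_fin]; omega
  -- upper sets
  have hup : ∀ x : M ⊕ Fin p, IsUpperSet (d x) := by
    rintro (a | t) r s hrs hr
    · exact mMono' inst hM hrs a hr
    · simp only [hd, extD] at hr ⊢
      split at hr
      · rename_i hcond
        simp only [hcond, if_true] at hr ⊢
        exact le_trans hr hrs
      · exact absurd hr (Set.notMem_empty _)
  -- tiebreak props
  have htb_tr : Transitive tb := by
    rintro (a | i) (b | j) (c | k) h1 h2 <;>
      simp only [htb, extTb] at * <;> try trivial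
    · exact mTrans inst hM a b c h1 h2
    · omega
  have htb_ir : Irreflexive tb := by
    rintro (a | i) h <;> simp only [htb, extTb] at h
    · exact mIrrefl inst hM a h
    · omega
  have htb_to : ∀ x y : M ⊕ Fin p, x ≠ y → tb x y ∨ tb y x := by
    rintro (a | i) (b | j) hne
    · simp only [htb, extTb]
      rcases mTotal inst hM a b with h | h | h
      · exact Or.inl h
      · exact absurd (congrArg Sum.inl h) hne
      · exact Or.inr h
    · exact Or.inl trivial
    · exact Or.inr trivial
    · simp only [htb, extTb]
      have : (i : ℕ) ≠ (j : ℕ) := fun hc => hne (by simp [Fin.ext_iff, hc])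
      omega
  -- pins
  have hpin : ∀ k : ℕ, 2 * k + 2 ≤ Fintype.card (M ⊕ Fin p) →
      ∃ x : M ⊕ Fin p, d x = Set.Ici (qr k) := by
    intro k hk
    rw [hcardX] at hk
    by_cases h2 : 2 * k + 2 ≤ n
    · obtain ⟨x, hx1, hx2⟩ := pin_exists inst hM k
        (by rw [Cardinal.mk_fintype, ← hn]; exact_mod_cast h2)
      refine ⟨Sum.inl x, ?_⟩
      simp only [hd, extD]
      ext t
      constructor
      · intro ht
        by_contra hc
        exact hx2 t (lt_of_not_ge (fun hle => hc hle)) ht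
      · intro ht
        exact hx1 t ht
    · have hbk : base ≤ k := by omega
      have htp : k - base < p := by omega
      refine ⟨Sum.inr ⟨k - base, htp⟩, ?_⟩
      simp only [hd, extD]
      have hbk2 : base + (k - base) = k := by omega
      rw [hbk2, if_pos hk]
  -- the model
  refine ⟨M ⊕ Fin p, cStr d tb, Sum.inl, gen_models d tb hup htb_tr htb_ir htb_to hpin, ?_, ?_⟩
  · rw [Cardinal.mk_fintype, hcardX]
  · intro φ hφ v
    refine transferQF inst (cStr d tb) Sum.inl Sum.inl_injective ?_ ?_ φ hφ v
    · intro x y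
      constructor
      · intro h
        have hsub : bigD inst y ⊆ bigD inst x := fun r hr => mDown inst hM r x y h hr
        by_cases he : bigD inst x = bigD inst y
        · exact Or.inr ⟨he, h⟩
        · exact Or.inl (hsub.ssubset_of_ne (fun hc => he hc.symm))
      · rintro (hss | ⟨_, h⟩)
        · rcases mTotal inst hM x y with h | rfl | h
          · exact h
          · exact absurd hss (ssubset_irrefl _)
          · have : bigD inst x ⊆ bigD inst y := fun r hr => mDown inst hM r y x h hr
            rw [Set.ssubset_def] at hss
            exact absurd this hss.2
        · exact h
    · intro r x
      exact Iff.rfl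

end FS

end SFX

namespace SFX

section SF

variable {M : Type} (inst : L0.Structure M)

/-- tiebreak for the subtype construction -/
def sfTb {S' : Finset M} {p : ℕ} : (↥S' ⊕ Fin p) → (↥S' ⊕ Fin p) → Prop
  | .inl a, .inl b => ltM inst a.val b.val
  | .inl _, .inr _ => True
  | .inr _, .inl _ => False
  | .inr i, .inr j => (i : ℕ) < (j : ℕ)

/-- cut data for the subtype construction -/
def sfD {S' : Finset M} {p : ℕ} : (↥S' ⊕ Fin p) → Set ℝ
  | .inl y => bigD inst y.val
  | .inr j => Set.Ici (qr (j : ℕ))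

/-- tiebreak on the subtype itself -/
def yTb {S' : Finset M} (a b : ↥S') : Prop := ltM inst a.val b.val

/-- cLT on bigD data agrees with the original order -/
lemma cLT_bigD (hM : letI := inst; M ⊨ T0) {S' : Finset M} (x y : ↥S') :
    ltM inst x.val y.val ↔ cLT (fun z : ↥S' => bigD inst z.val) (yTb inst) x y := by
  constructor
  · intro h
    by_cases he : bigD inst x.val = bigD inst y.val
    · exact Or.inr ⟨he, h⟩
    · have hsub : bigD inst y.val ⊆ bigD inst x.val :=
        fun r hr => mDown inst hM r x.val y.val h hr
      exact Or.inl (hsub.ssubset_of_ne (fun hc => he hc.symm))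
  · rintro (hss | ⟨_, h⟩)
    · rcases mTotal inst hM x.val y.val with h | heq | h
      · exact h
      · rw [Set.ssubset_def] at hss
        exact absurd (fun r (hr : r ∈ bigD inst x.val) => (heq ▸ hr : r ∈ bigD inst y.val)) hss.2
      · have : bigD inst x.val ⊆ bigD inst y.val :=
          fun r hr => mDown inst hM r y.val x.val h hr
        rw [Set.ssubset_def] at hss
        exact absurd this hss.2
    · exact h

lemma sf_core (hM : letI := inst; M ⊨ T0) (hI : Infinite M)
    (φ : L0.Formula ℕ) (hφ : φ.IsQF) (v : ℕ → M) (hv : letI := inst; φ.Realize v) :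
    ∃ (N : Type) (instN : L0.Structure N), (letI := instN; (T0.Model N : Prop)) ∧ Finite N ∧
      Cardinal.mk N ≤ Cardinal.mk M ∧ ∃ w : ℕ → N, (letI := instN; φ.Realize w) := by
  classical
  set S' : Finset M := insert (v 0) (φ.freeVarFinset.image v) with hS'
  set sN := S'.card with hsN
  set d : (↥S' ⊕ Fin sN) → Set ℝ := sfD inst with hd
  set tb : (↥S' ⊕ Fin sN) → (↥S' ⊕ Fin sN) → Prop := sfTb inst with htb
  have hcardZ : Fintype.card (↥S' ⊕ Fin sN) = sN + sN := by
    simp [Fintype.card_sum, Fintype.card_coe, hsN]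
  have hup : ∀ x : ↥S' ⊕ Fin sN, IsUpperSet (d x) := by
    rintro (a | t) r s hrs hr
    · exact mMono' inst hM hrs a.val hr
    · exact le_trans hr hrs
  have htb_tr : Transitive tb := by
    rintro (a | i) (b | j) (c | k) h1 h2 <;> simp only [htb, sfTb] at * <;> try trivial
    · exact mTrans inst hM _ _ _ h1 h2
    · omega
  have htb_ir : Irreflexive tb := by
    rintro (a | i) h <;> simp only [htb, sfTb] at h
    · exact mIrrefl inst hM _ h
    · omega
  have htb_to : ∀ x y : ↥S' ⊕ Fin sN, x ≠ y → tb x y ∨ tb y x := by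
    rintro (a | i) (b | j) hne
    · simp only [htb, sfTb]
      rcases mTotal inst hM a.val b.val with h | h | h
      · exact Or.inl h
      · exact absurd (congrArg Sum.inl (Subtype.ext h)) hne
      · exact Or.inr h
    · exact Or.inl trivial
    · exact Or.inr trivial
    · simp only [htb, sfTb]
      have : (i : ℕ) ≠ (j : ℕ) := fun hc => hne (by simp [Fin.ext_iff, hc])
      omega
  have hpin : ∀ k : ℕ, 2 * k + 2 ≤ Fintype.card (↥S' ⊕ Fin sN) →
      ∃ x : ↥S' ⊕ Fin sN, d x = Set.Ici (qr k) := by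
    intro k hk
    rw [hcardZ] at hk
    have hkp : k < sN := by omega
    exact ⟨Sum.inr ⟨k, hkp⟩, rfl⟩
  refine ⟨↥S' ⊕ Fin sN, cStr d tb, gen_models d tb hup htb_tr htb_ir htb_to hpin,
    Finite.instSum, le_trans (le_of_lt (Cardinal.lt_aleph0_of_finite _)) (Cardinal.aleph0_le_mk M),
    ?_⟩
  -- the valuation
  set v' : ℕ → M := fun i => if i ∈ φ.freeVarFinset then v i else v 0 with hv'
  have hmem' : ∀ i, v' i ∈ S' := by
    intro i
    rw [hv']
    by_cases h : i ∈ φ.freeVarFinset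
    · simp only [h, if_true, hS']
      exact Finset.mem_insert_of_mem (Finset.mem_image_of_mem v h)
    · simp only [h, if_false, hS']
      exact Finset.mem_insert_self _ _
  set vY : ℕ → ↥S' := fun i => ⟨v' i, hmem' i⟩ with hvY
  refine ⟨Sum.inl ∘ vY, ?_⟩
  -- transfer chain
  letI instY : L0.Structure ↥S' := cStr (fun z : ↥S' => bigD inst z.val) (yTb inst)
  have T2 := transferQF instY (cStr d tb) Sum.inl Sum.inl_injective
    (fun x y => Iff.rfl) (fun r x => Iff.rfl) φ hφ vY
  have T1 := transferQF instY inst Subtype.val Subtype.val_injective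
    (fun x y => (cLT_bigD inst hM x y).symm) (fun r x => Iff.rfl) φ hφ vY
  have hvv' : (letI := inst; φ.Realize v') ↔ (letI := inst; φ.Realize v) := by
    apply realize_congr_freeVar
    intro i hi
    rw [hv']
    simp [hi]
  have hval : (Subtype.val ∘ vY) = v' := rfl
  rw [T2]
  rw [← hval] at hvv'
  exact T1.symm.2 (hvv'.2 hv)

end SF

section NotSmooth

/-- the trivial one-element model -/
def oneStr : L0.Structure (Fin 1) :=
  cStr (fun _ => (∅ : Set ℝ)) (fun i j : Fin 1 => (i : ℕ) < (j : ℕ))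

lemma one_models : (letI := oneStr; (T0.Model (Fin 1) : Prop)) := by
  apply gen_models
  · intro x
    exact isUpperSet_empty
  · rintro i j k h1 h2
    omega
  · intro i h
    omega
  · intro i j hne
    exact absurd (Subsingleton.elim i j) hne
  · intro k hk
    simp only [Fintype.card_fin] at hk
    omega

/-- the diagonal QF formula -/
def phi0 : L0.Formula ℕ := Term.equal (Term.var 0) (Term.var 0)

lemma phi0_qf : phi0.IsQF := (BoundedFormula.IsAtomic.equal _ _).isQF

lemma phi0_realize {M : Type} (inst : L0.Structure M) (v : ℕ → M) :
    (letI := inst; phi0.Realize v) := by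
  letI := inst
  simp [phi0, Formula.realize_equal]

end NotSmooth

end SFX

end

/-- There exist a one-sorted first-order language `L` and an `L`-theory `T` such that `T`
is stably finite and finitely smooth, but not smooth. -/
theorem stmt_17 :
    ∃ (L : FirstOrder.Language.{0, 0}) (T : L.Theory),
      StablyFiniteT L T ∧ FinitelySmoothT L T ∧ ¬ SmoothT L T := by
  refine ⟨SFX.L0, SFX.T0, ?_, ?_, ?_⟩
  · -- stably finite
    intro φ hφ M inst hMT v hv
    by_cases hfin : Finite M
    · exact ⟨M, inst, hMT, hfin, le_rfl, v, hv⟩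
    · have hI : Infinite M := not_finite_iff_infinite.1 hfin
      obtain ⟨N, instN, h1, h2, h3, w, hw⟩ := SFX.sf_core inst hMT hI φ hφ v hv
      exact ⟨N, instN, h1, h2, h3, w, hw⟩
  · -- finitely smooth
    intro φ hφ M inst hMT v hv κ hκ
    have hfin : Finite M :=
      Cardinal.lt_aleph0_iff_finite.1 (lt_of_le_of_lt hκ (Cardinal.nat_lt_aleph0 κ))
    letI := Fintype.ofFinite M
    have hcard : Fintype.card M ≤ κ := by
      rw [Cardinal.mk_fintype] at hκ
      exact_mod_cast hκ
    obtain ⟨N, instN, g, h1, h2, h3⟩ := SFX.fs_core inst hMT κ hcard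
    exact ⟨N, instN, h1, h2, g ∘ v, (h3 φ hφ v).2 hv⟩
  · -- not smooth
    intro hS
    obtain ⟨N, instN, hNmod, hNcard, -⟩ :=
      hS SFX.phi0 SFX.phi0_qf (Fin 1) SFX.oneStr SFX.one_models
        (fun _ => 0) (SFX.phi0_realize SFX.oneStr _) Cardinal.aleph0
        (by
          rw [Cardinal.mk_fintype]
          simp only [Fintype.card_fin, Nat.cast_one]
          exact le_of_lt (Cardinal.nat_lt_aleph0 1) |> fun h => by exact_mod_cast h)
    have hNinf : Infinite N := Cardinal.infinite_iff.2 (le_of_eq hNcard.symm)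
    have := SFX.continuum_le instN hNmod hNinf
    rw [hNcard] at this
    exact absurd this (not_le.2 Cardinal.aleph0_lt_continuum)
end

section
/- Let L be a one-sorted first-order language, let C be a class of finite L-structures, and let T be the L-theory axiomatized by the set of all L-sentences that are true in every member of C. Then T is stably finite: for every quantifier-free L-formula φ and every model A of T with a valuation satisfying φ, there is a model B of T with a valuation satisfying φ such that B is finite and |B| ≤ |A|. -/
open FirstOrder FirstOrder.Language

universe u v

/-- The sentence `σ` holds in `M`, with the structure instance given explicitly. -/
def SentHolds (L : FirstOrder.Language.{u, v}) (M : Type) (inst : L.Structure M)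
    (σ : L.Sentence) : Prop :=
  letI := inst
  M ⊨ σ

/-- Let `C` be a class of finite `L`-structures and let `T` be the theory axiomatized by
the set of all `L`-sentences true in every member of `C`. Then `T` is stably finite. -/
theorem stmt_18 (L : FirstOrder.Language.{u, v})
    (C : ∀ (M : Type), L.Structure M → Prop)
    (hfin : ∀ (M : Type) (inst : L.Structure M), C M inst → Finite M)
    (T : L.Theory)
    (hT : T = {σ : L.Sentence | ∀ (M : Type) (inst : L.Structure M), C M inst →
      SentHolds L M inst σ}) :
    StablyFiniteT L T := by
  intro φ hφ M inst hM v hv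
  by_cases hMfin : Finite M
  · exact ⟨M, inst, hM, hMfin, le_rfl, v, hv⟩
  · classical
    letI := inst
    haveI : Infinite M := not_finite_iff_infinite.mp hMfin
    haveI hMT : T.Model M := hM
    haveI : Finite ↥(↑φ.freeVarFinset : Set ℕ) := φ.freeVarFinset.finite_toSet.to_subtype
    let ψ : L.Formula ↥(↑φ.freeVarFinset : Set ℕ) :=
      φ.restrictFreeVar (Set.inclusion (subset_refl _))
    let σ : L.Sentence :=
      ((ψ.relabel (Sum.inr : ↥(↑φ.freeVarFinset : Set ℕ) → Empty ⊕ _)).iExs _) ⊓ Sentence.cardGe L 1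
    have hMσ : M ⊨ σ := by
      refine Formula.realize_inf.mpr ⟨?_, ?_⟩
      · refine Formula.realize_iExs.mpr ⟨fun x => v x, ?_⟩
        exact Formula.realize_relabel.mpr ((BoundedFormula.realize_restrictFreeVar' (subset_refl _)).mpr hv)
      · refine (Sentence.realize_cardGe L 1).mpr ?_
        simpa using Cardinal.one_le_iff_ne_zero.mpr (Cardinal.mk_ne_zero M)
    have hnot : σ.not ∉ T := by
      intro h
      exact (Sentence.realize_not M).mp (Theory.realize_sentence_of_mem T h) hMσ
    rw [hT] at hnot
    simp only [Set.mem_setOf_eq, not_forall] at hnot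
    obtain ⟨N, instN, hC, hNσn⟩ := hnot
    letI := instN
    have hNσ : N ⊨ σ := by
      by_contra h
      exact hNσn ((Sentence.realize_not N).mpr h)
    haveI hNfin : Finite N := hfin N instN hC
    have hNT : ModelsT L T N instN := by
      have hm : T.Model N := (Theory.model_iff (M := N) (T := T)).mpr fun τ hτ => by
        rw [hT] at hτ; exact hτ N instN hC
      exact hm
    obtain ⟨h1, h2⟩ := Formula.realize_inf.mp hNσ
    have h2' : (1 : Cardinal) ≤ Cardinal.mk N := by
      have := (Sentence.realize_cardGe L 1).mp h2
      simpa using this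
    haveI hNne : Nonempty N := by
      rw [← Cardinal.mk_ne_zero_iff]
      intro h0
      rw [h0] at h2'
      simp at h2'
    obtain ⟨i, hi⟩ := Formula.realize_iExs.mp h1
    obtain ⟨n0⟩ := hNne
    refine ⟨N, instN, hNT, hNfin, ?_, ?_⟩
    · exact le_of_lt (lt_of_lt_of_le (Cardinal.lt_aleph0_of_finite N)
        (Cardinal.infinite_iff.mp ‹Infinite M›))
    · set w : ℕ → N := fun x => if h : x ∈ φ.freeVarFinset then i ⟨x, h⟩ else n0 with hw
      refine ⟨w, ?_⟩
      show φ.Realize w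
      refine (BoundedFormula.realize_restrictFreeVar'
        (φ := φ) (s := (↑φ.freeVarFinset : Set ℕ)) (subset_refl _)
        (v := w) (xs := default)).mp ?_
      have hwe : w ∘ (Subtype.val) = fun a => i a := funext fun a => dif_pos a.2
      show BoundedFormula.Realize _ (w ∘ (Subtype.val)) default
      rw [hwe]
      exact (Formula.realize_relabel (g := Sum.inr)).mp hi
end
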